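/- Let n = 4 and suppose a_ij ≠ 0 for all i < j. Then the image of G(A) in S_4 contains the Klein four-group {id, (12)(34), (13)(24), (14)(23)}. -/

import Mathlib

lemma stmt18aux (k : Type) [Field k]
    (a : Fin 4 → Fin 4 → k) (hsym : ∀ i j, a i j = a j i)
    (ha : ∀ i j, i ≠ j → a i j ≠ 0)
    (hsq : ∀ c : k, ∃ d : k, d ^ 2 = c)
    (σ : Equiv.Perm (Fin 4)) (p q s t : Fin 4)
    (hσp : σ p = q) (hσq : σ q = p) (hσs : σ s = t) (hσt : σ t = s)
    (hpq : p ≠ q) (hps : p ≠ s) (hpt : p ≠ t) (hqs : q ≠ s) (hqt : q ≠ t) (hst : s ≠ t)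
    (hcover : ∀ i : Fin 4, i = p ∨ i = q ∨ i = s ∨ i = t) :
    ∃ r : Fin 4 → kˣ,
      ∀ i j, i ≠ j → a i j = (r i : k) * (r j : k) * a (σ i) (σ j) := by
  have hA0 : a p s ≠ 0 := ha p s hps
  have hB0 : a p t ≠ 0 := ha p t hpt
  have hC0 : a q s ≠ 0 := ha q s hqs
  have hD0 : a q t ≠ 0 := ha q t hqt
  obtain ⟨d, hd⟩ := hsq (a p s * a p t / (a q t * a q s))
  have hd0 : d ≠ 0 := by
    intro h
    rw [h] at hd
    simp only [ne_eq, zero_pow, OfNat.ofNat_ne_zero, not_false_iff] at hd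
    field_simp at hd
    exact mul_ne_zero hA0 hB0 (by rw [← hd]; ring)
  have hd2 : d ^ 2 * (a q t * a q s) = a p s * a p t := by
    rw [hd]; field_simp
  set rr : Fin 4 → k := fun i =>
    if i = p then d else if i = q then d⁻¹
    else if i = s then a p s / (a q t * d) else d * a q t / a p s
    with hrr
  have rp : rr p = d := by simp [hrr]
  have rq : rr q = d⁻¹ := by simp [hrr, hpq.symm]
  have rs : rr s = a p s / (a q t * d) := by simp [hrr, hps.symm, hqs.symm]
  have rt : rr t = d * a q t / a p s := by simp [hrr, hpt.symm, hqt.symm, hst.symm]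
  have hr0 : ∀ i, rr i ≠ 0 := by
    intro i
    rcases hcover i with h | h | h | h <;> rw [h]
    · rw [rp]; exact hd0
    · rw [rq]; exact inv_ne_zero hd0
    · rw [rs]; exact div_ne_zero hA0 (mul_ne_zero hD0 hd0)
    · rw [rt]; exact div_ne_zero (mul_ne_zero hd0 hD0) hA0
  refine ⟨fun i => Units.mk0 (rr i) (hr0 i), ?_⟩
  intro i j hij
  simp only [Units.val_mk0]
  rcases hcover i with h1 | h1 | h1 | h1 <;> rcases hcover j with h2 | h2 | h2 | h2 <;>
      rw [h1, h2] at hij ⊢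
  all_goals try exact absurd rfl hij
  all_goals try simp only [hσp, hσq, hσs, hσt, rp, rq, rs, rt]
  all_goals try simp only [hsym s p]
  all_goals try simp only [hsym t p]
  all_goals try simp only [hsym t s]
  all_goals try simp only [hsym q p]
  all_goals try simp only [hsym s q]
  all_goals try simp only [hsym t q]
  all_goals (field_simp; try ring)
  all_goals first | linear_combination hd2 | linear_combination -hd2

/-- For `n = 4` with all `a_{ij} ≠ 0` (over a field where every element has a
square root), the image of `G(𝒜)` in `S_4` contains the Klein four-group
`{id, (12)(34), (13)(24), (14)(23)}`. -/
theorem stmt18 (k : Type) [Field k]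
    (a : Fin 4 → Fin 4 → k) (hsym : ∀ i j, a i j = a j i)
    (ha : ∀ i j, i ≠ j → a i j ≠ 0)
    (hsq : ∀ c : k, ∃ d : k, d ^ 2 = c) :
    ∀ σ ∈ ({1, Equiv.swap 0 1 * Equiv.swap 2 3, Equiv.swap 0 2 * Equiv.swap 1 3,
        Equiv.swap 0 3 * Equiv.swap 1 2} : Set (Equiv.Perm (Fin 4))),
      ∃ r : Fin 4 → kˣ,
        ∀ i j, i ≠ j → a i j = (r i : k) * (r j : k) * a (σ i) (σ j) := by
  intro σ hσ
  simp only [Set.mem_insert_iff, Set.mem_singleton_iff] at hσ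
  rcases hσ with h | h | h | h <;> subst h
  · exact ⟨fun _ => 1, fun i j hij => by simp⟩
  · exact stmt18aux k a hsym ha hsq _ 0 1 2 3 (by decide) (by decide) (by decide)
      (by decide) (by decide) (by decide) (by decide) (by decide) (by decide)
      (by decide) (by decide)
  · exact stmt18aux k a hsym ha hsq _ 0 2 1 3 (by decide) (by decide) (by decide)
      (by decide) (by decide) (by decide) (by decide) (by decide) (by decide)
      (by decide) (by decide)
  · exact stmt18aux k a hsym ha hsq _ 0 3 1 2 (by decide) (by decide) (by decide)
      (by decide) (by decide) (by decide) (by decide) (by decide) (by decide)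
      (by decide) (by decide)
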